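/- Let n : ℕ and let V : ℝⁿ → ℝⁿ be a C² vector field. Then for every point p ∈ ℝⁿ and every vector Y ∈ ℝⁿ, the second Lie derivative of the flat metric satisfies the identity ⟨B(p) Y, Y⟩ = 2 ⟨(fderiv ℝ (∇_V V) p) Y, Y⟩ + 2 ‖DV(p) Y‖². (This is the flat-space, diagonal (X = Y) form of the paper's curvature identity (e6), where the Riemann curvature term vanishes.) -/

import Mathlib

set_option maxHeartbeats 1000000


open scoped RealInnerProductSpace

noncomputable section

/-- Euclidean space `ℝⁿ`. -/
abbrev E (n : ℕ) := EuclideanSpace ℝ (Fin n)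

/-- The field of symmetric operators representing the Lie derivative `L_V g` of the flat
metric: `A(p) = DV(p) + DV(p)*`. -/
def LieDerivOp {n : ℕ} (V : E n → E n) (p : E n) : E n →L[ℝ] E n :=
  fderiv ℝ V p + ContinuousLinearMap.adjoint (fderiv ℝ V p)

/-- The field of operators representing the second Lie derivative `L_V L_V g`:
`B(p) = (D_{V(p)} A) + A(p) ∘ DV(p) + DV(p)* ∘ A(p)`. -/
def LieDeriv2Op {n : ℕ} (V : E n → E n) (p : E n) : E n →L[ℝ] E n :=
  fderiv ℝ (LieDerivOp V) p (V p)
    + (LieDerivOp V p).comp (fderiv ℝ V p)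
    + (ContinuousLinearMap.adjoint (fderiv ℝ V p)).comp (LieDerivOp V p)

/-- The adjoint as an ℝ-linear continuous map. -/
def adjCLM (n : ℕ) : (E n →L[ℝ] E n) →L[ℝ] (E n →L[ℝ] E n) :=
  LinearMap.mkContinuous
    { toFun := ContinuousLinearMap.adjoint
      map_add' := fun T S => by simp
      map_smul' := fun r T => by simp }
    1 (fun T => by
      rw [one_mul]
      exact le_of_eq (ContinuousLinearMap.adjoint.norm_map T))

@[simp] lemma adjCLM_apply {n : ℕ} (T : E n →L[ℝ] E n) :
    adjCLM n T = ContinuousLinearMap.adjoint T := rfl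

/-- the flat-space, diagonal form of the curvature identity (e6):
`⟨B(p) Y, Y⟩ = 2 ⟨(fderiv (∇_V V) p) Y, Y⟩ + 2 ‖DV(p) Y‖²`. -/
theorem lieDeriv2_inner_eq {n : ℕ} (V : E n → E n) (hV : ContDiff ℝ 2 V)
    (p Y : E n) :
    ⟪LieDeriv2Op V p Y, Y⟫ =
      2 * ⟪fderiv ℝ (fun q => fderiv ℝ V q (V q)) p Y, Y⟫
        + 2 * ‖fderiv ℝ V p Y‖ ^ 2 := by
  have hVd : Differentiable ℝ V := hV.differentiable two_ne_zero
  have hDc : ContDiff ℝ 1 (fun q => fderiv ℝ V q) := hV.fderiv_right (le_refl 2)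
  have hDd : Differentiable ℝ (fun q => fderiv ℝ V q) := hDc.differentiable one_ne_zero
  set D : E n → (E n →L[ℝ] E n) := fun q => fderiv ℝ V q with hD
  set D2 : E n →L[ℝ] (E n →L[ℝ] E n) := fderiv ℝ D p with hD2
  -- derivative of the Lie-derivative operator field
  have hA : fderiv ℝ (LieDerivOp V) p = D2 + (adjCLM n).comp D2 := by
    have h1 : LieDerivOp V = fun q => D q + adjCLM n (D q) := by
      funext q; simp [LieDerivOp]; rfl
    have h2 : DifferentiableAt ℝ (fun q => adjCLM n (D q)) p :=
      ((adjCLM n).differentiableAt).comp p (hDd p)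
    rw [h1, fderiv_fun_add (hDd p) h2]
    congr 1
    exact ((adjCLM n).hasFDerivAt.comp p (hDd p).hasFDerivAt).fderiv
  -- symmetry of the second derivative
  have hsymm : D2 (V p) Y = D2 Y (V p) :=
    (hV.contDiffAt.isSymmSndFDerivAt (by simp)) (V p) Y
  -- derivative of ∇_V V
  have hnab : fderiv ℝ (fun q => fderiv ℝ V q (V q)) p Y
      = D p (D p Y) + D2 Y (V p) := by
    rw [fderiv_clm_apply (hDd p) (hVd p)]
    simp
    rfl
  rw [hnab]
  simp only [LieDeriv2Op, hA]
  have adj := fun (T : E n →L[ℝ] E n) (x y : E n) =>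
    ContinuousLinearMap.adjoint_inner_left (𝕜 := ℝ) T x y
  simp only [ContinuousLinearMap.add_apply, ContinuousLinearMap.coe_comp',
    Function.comp_apply, adjCLM_apply, LieDerivOp, inner_add_left]
  rw [adj, adj, adj]
  simp only [ContinuousLinearMap.add_apply, inner_add_left, inner_add_right]
  rw [adj]
  rw [hsymm]
  have h3 : ⟪D p Y, D p Y⟫ = ‖D p Y‖ ^ 2 := real_inner_self_eq_norm_sq _
  ring_nf
  rw [real_inner_comm (D p (D p Y)) Y, real_inner_comm (D2 Y (V p)) Y] at *
  nlinarith [h3]
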